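/- Let q = (q')^(ρ+1) with ρ ≥ 0. Any m-dimensional q'-subgeometry of PG(m,q) is a ρ-saturating set of PG(m,q): every point of PG(m,q) lies in a subspace of dimension at most ρ spanned by points of the subgeometry. -/

import Mathlib

/-- A `d`-dimensional `q'`-subgeometry of `PG(m,q)` (with `F_{q'} = K ⊆ F = F_q`). -/
def IsSubgeometry (K F : Type*) [Field K] [Field F] [Algebra K F] (m d : ℕ)
    (B : Set (Projectivization F (Fin (m + 1) → F))) : Prop :=
  ∃ b : Fin (d + 1) → (Fin (m + 1) → F), LinearIndependent F b ∧
    B = {P | ∃ (v : Fin (m + 1) → F) (hv : v ≠ 0),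
      v ∈ Submodule.span K (Set.range b) ∧ P = Projectivization.mk F v hv}

/-- Let `q = (q')^(ρ+1)`.  Any `m`-dimensional `q'`-subgeometry of `PG(m,q)` is a
`ρ`-saturating set: every point lies in a subspace of dimension at most `ρ` spanned by
points of the subgeometry. -/
theorem stmt13 (K F : Type*) [Field K] [Field F] [Algebra K F] [Fintype K] [Fintype F]
    (ρ m : ℕ) (hq : Fintype.card F = Fintype.card K ^ (ρ + 1))
    (B : Set (Projectivization F (Fin (m + 1) → F))) (hB : IsSubgeometry K F m m B) :
    ∀ P : Projectivization F (Fin (m + 1) → F),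
      ∃ T : Finset (Projectivization F (Fin (m + 1) → F)),
        ↑T ⊆ B ∧ T.card ≤ ρ + 1 ∧
        P.rep ∈ Submodule.span F
          (Projectivization.rep '' (↑T : Set (Projectivization F (Fin (m + 1) → F)))) := by
  classical
  intro P
  obtain ⟨b, hb, hBeq⟩ := hB
  -- finrank of F over K is ρ + 1
  have hcard : Fintype.card F = Fintype.card K ^ Module.finrank K F :=
    Module.card_eq_pow_finrank (K := K)
  have h1 : (1 : ℕ) < Fintype.card K := Fintype.one_lt_card
  have hr : Module.finrank K F = ρ + 1 :=
    Nat.pow_right_injective h1 (hcard.symm.trans hq)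
  -- a basis of F over K
  let e : Module.Basis (Fin (ρ + 1)) K F := Module.finBasisOfFinrankEq K F hr
  -- b is a basis of F^{m+1} over F
  let bF : Module.Basis (Fin (m + 1)) F (Fin (m + 1) → F) :=
    basisOfLinearIndependentOfCardEqFinrank hb (by simp)
  have hbF : ∀ i, bF i = b i := fun i => by
    simp [bF, coe_basisOfLinearIndependentOfCardEqFinrank]
  -- coordinates of P.rep in the basis b
  set c : Fin (m + 1) → F := fun i => bF.repr P.rep i with hc
  -- the K-components
  set w : Fin (ρ + 1) → (Fin (m + 1) → F) :=
    fun j => ∑ i, e.repr (c i) j • b i with hw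
  -- the key decomposition
  have hkey : ∑ j, e j • w j = P.rep := by
    rw [hw]
    simp only
    simp_rw [Finset.smul_sum]
    rw [Finset.sum_comm]
    calc ∑ i, ∑ j, e j • e.repr (c i) j • b i
          = ∑ i, (∑ j, e.repr (c i) j • e j) • b i := by
            refine Finset.sum_congr rfl fun i _ => ?_
            rw [Finset.sum_smul]
            refine Finset.sum_congr rfl fun j _ => ?_
            rw [smul_comm, smul_assoc]
      _ = ∑ i, c i • b i := by
            refine Finset.sum_congr rfl fun i _ => ?_
            rw [e.sum_repr (c i)]
      _ = P.rep := by
            rw [Finset.sum_congr rfl fun i _ => by rw [← hbF i]]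
            exact bF.sum_repr P.rep
  -- the finset of points of B
  let T : Finset (Projectivization F (Fin (m + 1) → F)) :=
    Finset.univ.image (fun j : {j : Fin (ρ + 1) // w j ≠ 0} =>
      Projectivization.mk F (w j.1) j.2)
  refine ⟨T, ?_, ?_, ?_⟩
  · -- T ⊆ B
    intro Q hQ
    simp only [T, Finset.coe_image, Set.mem_image] at hQ
    obtain ⟨j, -, rfl⟩ := hQ
    rw [hBeq]
    refine ⟨w j.1, j.2, ?_, rfl⟩
    exact Submodule.sum_mem _ fun i _ =>
      Submodule.smul_mem _ _ (Submodule.subset_span ⟨i, rfl⟩)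
  · -- card bound
    calc T.card ≤ Fintype.card {j : Fin (ρ + 1) // w j ≠ 0} :=
          (Finset.card_image_le).trans (le_of_eq (Finset.card_univ))
      _ ≤ Fintype.card (Fin (ρ + 1)) := Fintype.card_subtype_le _
      _ = ρ + 1 := Fintype.card_fin _
  · -- span membership
    have hwmem : ∀ j, w j ∈ Submodule.span F
        (Projectivization.rep '' (↑T : Set (Projectivization F (Fin (m + 1) → F)))) := by
      intro j
      by_cases h : w j = 0
      · rw [h]; exact Submodule.zero_mem _
      · obtain ⟨a, ha⟩ := Projectivization.exists_smul_eq_mk_rep F (w j) h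
        have hT : Projectivization.mk F (w j) h ∈ T := by
          simp only [T, Finset.mem_image]
          exact ⟨⟨j, h⟩, Finset.mem_univ _, rfl⟩
        have hrep : (Projectivization.mk F (w j) h).rep ∈
            Projectivization.rep '' (↑T : Set (Projectivization F (Fin (m + 1) → F))) :=
          ⟨_, hT, rfl⟩
        have : w j = (a⁻¹ : Fˣ) • (Projectivization.mk F (w j) h).rep := by
          rw [← ha, smul_smul]; simp
        rw [this]
        exact Submodule.smul_mem _ _ (Submodule.subset_span hrep)
    rw [← hkey]
    exact Submodule.sum_mem _ fun j _ => Submodule.smul_mem _ _ (hwmem j)
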